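/- arXiv:2209.14575 — 2 statements merged into one kernel-verified Lean document; each statement's English description precedes it below -/
import Mathlib

section
/- Let L : ℝ^m × ℝ^n → ℝ be C², α : ℝ, and define the iterates y^{k'+1}(w) = y^{k'}(w) + α • ∇_y L(w, y^{k'}(w)) starting from a C¹ initialization y⁰(w) = f(w). Then for every K, the map w ↦ L(w, y^K(w)) is differentiable, and its total derivative satisfies d/dw [L(w, y^K(w))] = ∇_w L(w, y^K(w)) + Σ_{k'=0}^{K} (∂y^{k'}/∂w)ᵀ · v^{k'}, where v^K = ∇_y L(w, y^K(w)), v^{k'} = (I + α ∇²_{yy} L(w, y^{k'}))ᵀ v^{k'+1} for k' < K, ∂y^{k'+1}/∂w = α ∇²_{wy} L(w, y^{k'}) (the partial derivative with y^{k'} held fixed), and ∂y⁰/∂w = Df(w). -/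
set_option maxHeartbeats 1000000


open scoped RealInnerProductSpace
open ContinuousLinearMap (inl inr)
open InnerProductSpace (toDual)

section Aux

variable {E F : Type*} [NormedAddCommGroup E] [InnerProductSpace ℝ E]
  [NormedAddCommGroup F] [InnerProductSpace ℝ F] [CompleteSpace E] [CompleteSpace F]

/-- Partial Fréchet derivative in the second variable. -/
lemma aux_hasFDerivAt_snd (L : E × F → ℝ) (p : E × F) (hd : DifferentiableAt ℝ L p) :
    HasFDerivAt (fun y => L (p.1, y)) ((fderiv ℝ L p).comp (inr ℝ E F)) p.2 := by
  have h1 : HasFDerivAt L (fderiv ℝ L p) (p.1, p.2) := by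
    simpa using hd.hasFDerivAt
  exact h1.comp p.2 (hasFDerivAt_prodMk_right p.1 p.2)

/-- Partial Fréchet derivative in the first variable. -/
lemma aux_hasFDerivAt_fst (L : E × F → ℝ) (p : E × F) (hd : DifferentiableAt ℝ L p) :
    HasFDerivAt (fun x => L (x, p.2)) ((fderiv ℝ L p).comp (inl ℝ E F)) p.1 := by
  have h1 : HasFDerivAt L (fderiv ℝ L p) (p.1, p.2) := by
    simpa using hd.hasFDerivAt
  exact h1.comp p.1 (hasFDerivAt_prodMk_left p.1 p.2)

/-- Gradient of the second-variable partial map. -/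
lemma aux_grad_snd (L : E × F → ℝ) (p : E × F) (hd : DifferentiableAt ℝ L p) :
    gradient (fun y => L (p.1, y)) p.2 =
      (toDual ℝ F).symm ((fderiv ℝ L p).comp (inr ℝ E F)) :=
  (hasFDerivAt_iff_hasGradientAt.mp (aux_hasFDerivAt_snd L p hd)).gradient

/-- Splitting a composed derivative into its partial pieces. -/
lemma aux_comp_prod_split {G : Type*} [NormedAddCommGroup G] [NormedSpace ℝ G]
    (A : (E × F) →L[ℝ] G) (B : E →L[ℝ] F) :
    A.comp ((ContinuousLinearMap.id ℝ E).prod B) =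
      A.comp (inl ℝ E F) + (A.comp (inr ℝ E F)).comp B := by
  ext x
  have : ((x : E), B x) = (x, (0 : F)) + ((0 : E), B x) := by simp
  simp only [ContinuousLinearMap.comp_apply, ContinuousLinearMap.prod_apply,
    ContinuousLinearMap.coe_id', id_eq, ContinuousLinearMap.inl_apply,
    ContinuousLinearMap.inr_apply, ContinuousLinearMap.add_apply, this, map_add]

end Aux

/-- Back-propagation through gradient ascent (Theorem 1): the total derivative of
`w ↦ L (w, y^K (w))`, where `y^{k+1} (w) = y^k (w) + α • ∇_y L (w, y^k (w))` and
`y⁰ (w) = f w`, equals `∇_w L (w, y^K (w)) + Σ_{k=0}^{K} (∂y^k/∂w)ᵀ v^k` with the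
backward-recursion vectors `v^k`. -/
theorem stmt2 {m n : ℕ}
    (L : EuclideanSpace ℝ (Fin m) × EuclideanSpace ℝ (Fin n) → ℝ)
    (hL : ContDiff ℝ 2 L) (α : ℝ)
    (f : EuclideanSpace ℝ (Fin m) → EuclideanSpace ℝ (Fin n))
    (hf : ContDiff ℝ 1 f)
    (Y : ℕ → EuclideanSpace ℝ (Fin m) → EuclideanSpace ℝ (Fin n))
    (hY0 : ∀ w, Y 0 w = f w)
    (hYs : ∀ k w, Y (k + 1) w = Y k w + α • gradient (fun y => L (w, y)) (Y k w))
    (K : ℕ) (w : EuclideanSpace ℝ (Fin m))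
    -- backward vectors v^k
    (v : ℕ → EuclideanSpace ℝ (Fin n))
    (hvK : v K = gradient (fun y => L (w, y)) (Y K w))
    (hv : ∀ k < K, v k =
      (ContinuousLinearMap.adjoint
        (ContinuousLinearMap.id ℝ (EuclideanSpace ℝ (Fin n))
          + α • fderiv ℝ (fun y => gradient (fun y' => L (w, y')) y) (Y k w)))
        (v (k + 1)))
    -- partial Jacobians ∂y^k/∂w (with y^{k-1} held fixed)
    (J : ℕ → EuclideanSpace ℝ (Fin m) →L[ℝ] EuclideanSpace ℝ (Fin n))
    (hJ0 : J 0 = fderiv ℝ f w)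
    (hJ : ∀ k, J (k + 1) =
      α • fderiv ℝ (fun w' => gradient (fun y => L (w', y)) (Y k w)) w) :
    DifferentiableAt ℝ (fun w' => L (w', Y K w')) w ∧
    HasGradientAt (fun w' => L (w', Y K w'))
      (gradient (fun w' => L (w', Y K w)) w
        + ∑ k ∈ Finset.range (K + 1), (ContinuousLinearMap.adjoint (J k)) (v k)) w := by
  classical
  have hLd : Differentiable ℝ L := hL.differentiable two_ne_zero
  -- the joint gradient map
  set g : (EuclideanSpace ℝ (Fin m)) × (EuclideanSpace ℝ (Fin n)) → (EuclideanSpace ℝ (Fin n)) := fun p => gradient (fun y => L (p.1, y)) p.2 with hg_def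
  have hg_eq : g = fun p => (toDual ℝ (EuclideanSpace ℝ (Fin n))).symm ((fderiv ℝ L p).comp (inr ℝ (EuclideanSpace ℝ (Fin m)) (EuclideanSpace ℝ (Fin n)))) :=
    funext fun p => aux_grad_snd L p (hLd p)
  -- g is C¹
  have hDL : ContDiff ℝ 1 (fderiv ℝ L) := hL.fderiv_right (by norm_num)
  have hg1 : ContDiff ℝ 1 g := by
    rw [hg_eq]
    have h1 : ContDiff ℝ 1 (fun p : (EuclideanSpace ℝ (Fin m)) × (EuclideanSpace ℝ (Fin n)) => (fderiv ℝ L p).comp (inr ℝ (EuclideanSpace ℝ (Fin m)) (EuclideanSpace ℝ (Fin n)))) := by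
      have hc : ContDiff ℝ 1 (fun A : ((EuclideanSpace ℝ (Fin m)) × (EuclideanSpace ℝ (Fin n))) →L[ℝ] ℝ => A.comp (inr ℝ (EuclideanSpace ℝ (Fin m)) (EuclideanSpace ℝ (Fin n)))) :=
        ((ContinuousLinearMap.compL ℝ (EuclideanSpace ℝ (Fin n)) ((EuclideanSpace ℝ (Fin m)) × (EuclideanSpace ℝ (Fin n))) ℝ).flip (inr ℝ (EuclideanSpace ℝ (Fin m)) (EuclideanSpace ℝ (Fin n)))).contDiff
      exact hc.comp hDL
    exact ((toDual ℝ (EuclideanSpace ℝ (Fin n))).symm.contDiff).comp h1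
  have hgd : Differentiable ℝ g := hg1.differentiable one_ne_zero
  -- the iterates are differentiable
  have hYfun : ∀ k, Y (k + 1) = fun w' => Y k w' + α • g (w', Y k w') := by
    intro k; funext w'; exact hYs k w'
  have hYd : ∀ k, Differentiable ℝ (Y k) := by
    intro k; induction k with
    | zero =>
      have : Y 0 = f := funext hY0
      rw [this]; exact hf.differentiable one_ne_zero
    | succ k ih =>
      rw [hYfun k]
      exact ih.add (((hgd.comp (differentiable_id.prodMk ih))).const_smul α)
  -- notation for derivatives
  set D : ℕ → ((EuclideanSpace ℝ (Fin m)) →L[ℝ] (EuclideanSpace ℝ (Fin n))) := fun k => fderiv ℝ (Y k) w with hD_def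
  set H : ℕ → ((EuclideanSpace ℝ (Fin n)) →L[ℝ] (EuclideanSpace ℝ (Fin n))) :=
    fun k => (fderiv ℝ g (w, Y k w)).comp (inr ℝ (EuclideanSpace ℝ (Fin m)) (EuclideanSpace ℝ (Fin n))) with hH_def
  -- partial derivative identifications
  have hHeq : ∀ k, fderiv ℝ (fun y => gradient (fun y' => L (w, y')) y) (Y k w) = H k := by
    intro k
    have : (fun y => gradient (fun y' => L (w, y')) y) = fun y => g (w, y) := rfl
    rw [this]
    exact (((hgd (w, Y k w)).hasFDerivAt).comp (Y k w)
      (hasFDerivAt_prodMk_right w (Y k w))).fderiv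
  have hJeq : ∀ k, fderiv ℝ (fun w' => gradient (fun y => L (w', y)) (Y k w)) w =
      (fderiv ℝ g (w, Y k w)).comp (inl ℝ (EuclideanSpace ℝ (Fin m)) (EuclideanSpace ℝ (Fin n))) := by
    intro k
    have : (fun w' => gradient (fun y => L (w', y)) (Y k w)) = fun w' => g (w', Y k w) := rfl
    rw [this]
    exact (((hgd (w, Y k w)).hasFDerivAt).comp w
      (hasFDerivAt_prodMk_left (𝕜 := ℝ) w (Y k w))).fderiv
  -- forward recursion for the total derivatives
  have hDrec : ∀ k, D (k + 1) =
      J (k + 1) + (ContinuousLinearMap.id ℝ (EuclideanSpace ℝ (Fin n)) + α • H k).comp (D k) := by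
    intro k
    have hcomp : HasFDerivAt (fun w' => g (w', Y k w'))
        ((fderiv ℝ g (w, Y k w)).comp ((ContinuousLinearMap.id ℝ (EuclideanSpace ℝ (Fin m))).prod (D k))) w :=
      by have h := ((hgd (w, Y k w)).hasFDerivAt).comp w
          ((hasFDerivAt_id w).prodMk ((hYd k w).hasFDerivAt)); exact h
    have hsum : HasFDerivAt (Y (k + 1))
        (D k + α • ((fderiv ℝ g (w, Y k w)).comp ((ContinuousLinearMap.id ℝ (EuclideanSpace ℝ (Fin m))).prod (D k)))) w := by
      rw [hYfun k]
      exact ((hYd k w).hasFDerivAt).add (hcomp.const_smul α)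
    have hD1 : D (k + 1) = D k +
        α • ((fderiv ℝ g (w, Y k w)).comp ((ContinuousLinearMap.id ℝ (EuclideanSpace ℝ (Fin m))).prod (D k))) :=
      hsum.fderiv
    rw [hD1, aux_comp_prod_split, hJ k, hJeq k, smul_add,
      ContinuousLinearMap.add_comp, ContinuousLinearMap.id_comp,
      ContinuousLinearMap.smul_comp]
    abel
  -- backward accumulation
  have key : ∀ k, k ≤ K → (ContinuousLinearMap.adjoint (D k)) (v k) =
      ∑ i ∈ Finset.range (k + 1), (ContinuousLinearMap.adjoint (J i)) (v i) := by
    intro k hk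
    induction k with
    | zero =>
      have hY0' : Y 0 = f := funext hY0
      have : D 0 = J 0 := by rw [hD_def]; simp only [hY0', hJ0]
      rw [this]; simp
    | succ k ih =>
      have hkK : k < K := Nat.lt_of_succ_le hk
      have ih' := ih (le_of_lt hkK)
      have hvk := hv k hkK
      rw [hHeq k] at hvk
      rw [hDrec k, map_add, ContinuousLinearMap.adjoint_comp, Finset.sum_range_succ,
        ← ih', ContinuousLinearMap.add_apply, ContinuousLinearMap.comp_apply, ← hvk]
      abel
  -- derivative of the composite objective
  set P : (EuclideanSpace ℝ (Fin m)) × (EuclideanSpace ℝ (Fin n)) := (w, Y K w) with hP_def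
  have hphi : HasFDerivAt (fun w' => L (w', Y K w'))
      ((fderiv ℝ L P).comp ((ContinuousLinearMap.id ℝ (EuclideanSpace ℝ (Fin m))).prod (D K))) w :=
    ((hLd P).hasFDerivAt).comp w ((hasFDerivAt_id w).prodMk ((hYd K w).hasFDerivAt))
  refine ⟨hphi.differentiableAt, ?_⟩
  rw [hasGradientAt_iff_hasFDerivAt]
  have hsplit : (fderiv ℝ L P).comp ((ContinuousLinearMap.id ℝ (EuclideanSpace ℝ (Fin m))).prod (D K)) =
      (fderiv ℝ L P).comp (inl ℝ (EuclideanSpace ℝ (Fin m)) (EuclideanSpace ℝ (Fin n))) + ((fderiv ℝ L P).comp (inr ℝ (EuclideanSpace ℝ (Fin m)) (EuclideanSpace ℝ (Fin n)))).comp (D K) :=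
    aux_comp_prod_split _ _
  have hgradW : gradient (fun w' => L (w', Y K w)) w =
      (toDual ℝ (EuclideanSpace ℝ (Fin m))).symm ((fderiv ℝ L P).comp (inl ℝ (EuclideanSpace ℝ (Fin m)) (EuclideanSpace ℝ (Fin n)))) := by
    have := aux_hasFDerivAt_fst L P (hLd P)
    exact (hasFDerivAt_iff_hasGradientAt.mp this).gradient
  have hvK' : v K = (toDual ℝ (EuclideanSpace ℝ (Fin n))).symm ((fderiv ℝ L P).comp (inr ℝ (EuclideanSpace ℝ (Fin m)) (EuclideanSpace ℝ (Fin n)))) := by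
    rw [hvK]; exact aux_grad_snd L P (hLd P)
  have hfinal : (toDual ℝ (EuclideanSpace ℝ (Fin m))) (gradient (fun w' => L (w', Y K w)) w
      + ∑ k ∈ Finset.range (K + 1), (ContinuousLinearMap.adjoint (J k)) (v k)) =
      (fderiv ℝ L P).comp ((ContinuousLinearMap.id ℝ (EuclideanSpace ℝ (Fin m))).prod (D K)) := by
    rw [hsplit, ← key K le_rfl, map_add, hgradW]
    congr 1
    · exact (toDual ℝ (EuclideanSpace ℝ (Fin m))).apply_symm_apply _
    · ext x
      rw [InnerProductSpace.toDual_apply_apply, ContinuousLinearMap.adjoint_inner_left, hvK',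
        ContinuousLinearMap.comp_apply, InnerProductSpace.toDual_symm_apply]
  rw [hfinal]
  exact hphi
end

section
/- Let L : ℝ^m × ℝ^n → ℝ be C², define the K-step inner solve y^K(w) by y^{k+1} = y^k + α ∇_y L(w, y^k) with y⁰ = f(w) for C¹ f, and let v^{k'} be defined backwards by v^K = ∇_y L(w, y^K), v^{k'} = v^{k'+1} + α ∇²_{yy} L(w, y^{k'}) v^{k'+1}. Then the reverse accumulation ŵ := ∇_w L(w, y^K) + α Σ_{k'=0}^{K-1} ∇²_{wy} L(w, y^{k'})ᵀ-applied-to v^{k'+1} + Df(w)ᵀ v⁰ equals the total derivative d/dw L(w, y^K(w)). -/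
open InnerProductSpace ContinuousLinearMap

section aux
variable {E F : Type*} [NormedAddCommGroup E] [InnerProductSpace ℝ E] [CompleteSpace E]
  [NormedAddCommGroup F] [InnerProductSpace ℝ F] [CompleteSpace F]

lemma grad_def (f : E → ℝ) (x : E) :
    gradient f x = (toDual ℝ E).symm (fderiv ℝ f x) := rfl

lemma toDual_symm_comp (T : E →L[ℝ] F) (φ : F →L[ℝ] ℝ) :
    (toDual ℝ E).symm (φ.comp T) = ContinuousLinearMap.adjoint T ((toDual ℝ F).symm φ) := by
  apply ext_inner_right ℝ
  intro u
  rw [toDual_symm_apply, adjoint_inner_left, toDual_symm_apply]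
  rfl

end aux

set_option maxHeartbeats 1000000 in
/-- Correctness of the backward pass of Algorithm 1 (grad-2-level): the reverse
accumulation `ŵ = ∇_w L (w, y^K) + α Σ_{k=0}^{K−1} ∇²_{wy} L (w, y^k)ᵀ v^{k+1}
+ Df (w)ᵀ v⁰`, with `v^K = ∇_y L (w, y^K)` and
`v^k = v^{k+1} + α ∇²_{yy} L (w, y^k) v^{k+1}`, equals the exact total derivative
of `w ↦ L (w, y^K (w))`. -/
theorem stmt16 {m n : ℕ}
    (L : EuclideanSpace ℝ (Fin m) × EuclideanSpace ℝ (Fin n) → ℝ)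
    (hL : ContDiff ℝ 2 L) (α : ℝ)
    (f : EuclideanSpace ℝ (Fin m) → EuclideanSpace ℝ (Fin n))
    (hf : ContDiff ℝ 1 f)
    (Y : ℕ → EuclideanSpace ℝ (Fin m) → EuclideanSpace ℝ (Fin n))
    (hY0 : ∀ w', Y 0 w' = f w')
    (hYs : ∀ k w', Y (k + 1) w' = Y k w' + α • gradient (fun y => L (w', y)) (Y k w'))
    (K : ℕ) (w : EuclideanSpace ℝ (Fin m))
    (v : ℕ → EuclideanSpace ℝ (Fin n))
    (hvK : v K = gradient (fun y => L (w, y)) (Y K w))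
    (hv : ∀ k < K, v k = v (k + 1)
      + α • (fderiv ℝ (fun y => gradient (fun y' => L (w, y')) y) (Y k w)) (v (k + 1)))
    (what : EuclideanSpace ℝ (Fin m))
    (hwhat : what = gradient (fun w' => L (w', Y K w)) w
      + α • ∑ k ∈ Finset.range K,
          (ContinuousLinearMap.adjoint
            (fderiv ℝ (fun w' => gradient (fun y => L (w', y)) (Y k w)) w)) (v (k + 1))
      + (ContinuousLinearMap.adjoint (fderiv ℝ f w)) (v 0)) :
    HasGradientAt (fun w' => L (w', Y K w')) what w := by
  have hLd : ∀ p : EuclideanSpace ℝ (Fin m) × EuclideanSpace ℝ (Fin n), DifferentiableAt ℝ L p :=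
    fun p => (hL.differentiable (by norm_num)).differentiableAt
  -- partial fderivs
  have hpartr : ∀ (a : EuclideanSpace ℝ (Fin m)) (b : EuclideanSpace ℝ (Fin n)),
      HasFDerivAt (fun y => L (a, y)) ((fderiv ℝ L (a, b)).comp (inr ℝ (EuclideanSpace ℝ (Fin m)) (EuclideanSpace ℝ (Fin n)))) b :=
    fun a b => ((hLd (a, b)).hasFDerivAt).comp b (hasFDerivAt_prodMk_right a b)
  have hpartl : ∀ (a : EuclideanSpace ℝ (Fin m)) (b : EuclideanSpace ℝ (Fin n)),
      HasFDerivAt (fun x => L (x, b)) ((fderiv ℝ L (a, b)).comp (inl ℝ (EuclideanSpace ℝ (Fin m)) (EuclideanSpace ℝ (Fin n)))) a :=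
    fun a b => ((hLd (a, b)).hasFDerivAt).comp a (hasFDerivAt_prodMk_left a b)
  -- the gradient field g
  set g : EuclideanSpace ℝ (Fin m) × EuclideanSpace ℝ (Fin n) → EuclideanSpace ℝ (Fin n) := fun p => (toDual ℝ (EuclideanSpace ℝ (Fin n))).symm ((fderiv ℝ L p).comp (inr ℝ (EuclideanSpace ℝ (Fin m)) (EuclideanSpace ℝ (Fin n)))) with hgdef
  have hgrad : ∀ (a : EuclideanSpace ℝ (Fin m)) (b : EuclideanSpace ℝ (Fin n)), gradient (fun y => L (a, y)) b = g (a, b) := by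
    intro a b
    rw [grad_def, (hpartr a b).fderiv]
  have hg : ContDiff ℝ 1 g :=
    (toDual ℝ (EuclideanSpace ℝ (Fin n))).symm.contDiff.comp
      ((hL.fderiv_right (by norm_num)).clm_comp contDiff_const)
  have hgd : ∀ p : EuclideanSpace ℝ (Fin m) × EuclideanSpace ℝ (Fin n), HasFDerivAt g (fderiv ℝ g p) p :=
    fun p => ((hg.differentiable one_ne_zero) p).hasFDerivAt
  -- smoothness of the iterates
  have hYc : ∀ k, ContDiff ℝ 1 (Y k) := by
    intro k
    induction k with
    | zero => rw [show Y 0 = f from funext hY0]; exact hf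
    | succ k ih =>
      have hYe : Y (k + 1) = fun w' => Y k w' + α • g (w', Y k w') := by
        funext w'; rw [hYs k w', hgrad w' (Y k w')]
      rw [hYe]
      exact ih.add ((hg.comp (contDiff_id.prodMk ih)).const_smul α)
  set D : ℕ → (EuclideanSpace ℝ (Fin m) →L[ℝ] EuclideanSpace ℝ (Fin n)) := fun k => fderiv ℝ (Y k) w with hDdef
  have hYd : ∀ k, HasFDerivAt (Y k) (D k) w :=
    fun k => (((hYc k).differentiable one_ne_zero) w).hasFDerivAt
  set G : ℕ → (EuclideanSpace ℝ (Fin m) × EuclideanSpace ℝ (Fin n) →L[ℝ] EuclideanSpace ℝ (Fin n)) := fun k => fderiv ℝ g (w, Y k w) with hGdef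
  set A : ℕ → (EuclideanSpace ℝ (Fin m) →L[ℝ] EuclideanSpace ℝ (Fin n)) := fun k => (G k).comp (inl ℝ (EuclideanSpace ℝ (Fin m)) (EuclideanSpace ℝ (Fin n))) with hAdef
  set B : ℕ → (EuclideanSpace ℝ (Fin n) →L[ℝ] EuclideanSpace ℝ (Fin n)) := fun k => (G k).comp (inr ℝ (EuclideanSpace ℝ (Fin m)) (EuclideanSpace ℝ (Fin n))) with hBdef
  -- forward recursion for derivatives
  have hDsucc : ∀ k, D (k + 1) = D k + α • (A k + (B k).comp (D k)) := by
    intro k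
    have h1 : HasFDerivAt (fun w' => (w', Y k w'))
        ((ContinuousLinearMap.id ℝ (EuclideanSpace ℝ (Fin m))).prod (D k)) w := (hasFDerivAt_id w).prodMk (hYd k)
    have h2 : HasFDerivAt (fun w' => g (w', Y k w'))
        ((G k).comp ((ContinuousLinearMap.id ℝ (EuclideanSpace ℝ (Fin m))).prod (D k))) w :=
      by have := (hgd (w, Y k w)).comp w h1; exact this
    have hsplit : (G k).comp ((ContinuousLinearMap.id ℝ (EuclideanSpace ℝ (Fin m))).prod (D k))
        = A k + (B k).comp (D k) := by
      ext u
      have : ((u, D k u) : EuclideanSpace ℝ (Fin m) × EuclideanSpace ℝ (Fin n)) = (u, 0) + (0, D k u) := by simp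
      simp only [hAdef, hBdef, ContinuousLinearMap.comp_apply,
        ContinuousLinearMap.prod_apply, ContinuousLinearMap.add_apply,
        ContinuousLinearMap.coe_id', id_eq, ContinuousLinearMap.inl_apply,
        ContinuousLinearMap.inr_apply]
      rw [this, map_add]
    have hYe : Y (k + 1) = fun w' => Y k w' + α • g (w', Y k w') := by
      funext w'; rw [hYs k w', hgrad w' (Y k w')]
    have h3 : HasFDerivAt (Y (k + 1))
        (D k + α • ((G k).comp ((ContinuousLinearMap.id ℝ (EuclideanSpace ℝ (Fin m))).prod (D k)))) w := by
      rw [hYe]; exact (hYd k).add (h2.const_smul α)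
    rw [show D (k + 1) = fderiv ℝ (Y (k + 1)) w from rfl, h3.fderiv, hsplit]
  -- statement's Hessian blocks coincide with ours
  have hBstmt : ∀ k, fderiv ℝ (fun y => gradient (fun y' => L (w, y')) y) (Y k w) = B k := by
    intro k
    have he : (fun y => gradient (fun y' => L (w, y')) y) = fun y => g (w, y) :=
      funext fun y => hgrad w y
    rw [he]
    exact ((hgd (w, Y k w)).comp (Y k w) (hasFDerivAt_prodMk_right w (Y k w))).fderiv
  have hAstmt : ∀ k,
      fderiv ℝ (fun w' => gradient (fun y => L (w', y)) (Y k w)) w = A k := by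
    intro k
    have he : (fun w' => gradient (fun y => L (w', y)) (Y k w)) = fun w' => g (w', Y k w) :=
      funext fun w' => hgrad w' (Y k w)
    rw [he]
    exact ((hgd (w, Y k w)).comp w (hasFDerivAt_prodMk_left (𝕜 := ℝ) w (Y k w))).fderiv
  -- self-adjointness of B k
  have hBadj : ∀ k (x : EuclideanSpace ℝ (Fin n)), ContinuousLinearMap.adjoint (B k) x = B k x := by
    intro k x
    set h : EuclideanSpace ℝ (Fin n) → ℝ := fun y => L (w, y) with hhdef
    have hhC : ContDiff ℝ 2 h := hL.comp (contDiff_const.prodMk contDiff_id)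
    have hΨ : ContDiff ℝ 1 (fderiv ℝ h) := hhC.fderiv_right (by norm_num)
    have hΨd : HasFDerivAt (fderiv ℝ h) (fderiv ℝ (fderiv ℝ h) (Y k w)) (Y k w) :=
      ((hΨ.differentiable one_ne_zero) (Y k w)).hasFDerivAt
    have hBhas : HasFDerivAt (fun y => g (w, y)) (B k) (Y k w) :=
      (hgd (w, Y k w)).comp (Y k w) (hasFDerivAt_prodMk_right w (Y k w))
    have hsymm : IsSymmSndFDerivAt ℝ h (Y k w) :=
      hhC.contDiffAt.isSymmSndFDerivAt (by simp [minSmoothness_of_isRCLikeNormedField])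
    have hinner : ∀ u u' : EuclideanSpace ℝ (Fin n),
        inner ℝ (B k u) u' = fderiv ℝ (fderiv ℝ h) (Y k w) u u' := by
      intro u u'
      have hfe : (fun y => ((innerSL ℝ (E := EuclideanSpace ℝ (Fin n))).flip u') (g (w, y)))
          = fun y => (ContinuousLinearMap.apply ℝ ℝ u') (fderiv ℝ h y) := by
        funext y
        show inner ℝ (g (w, y)) u' = (fderiv ℝ h y) u'
        have : fderiv ℝ h y
            = (fderiv ℝ L (w, y)).comp (inr ℝ (EuclideanSpace ℝ (Fin m)) (EuclideanSpace ℝ (Fin n))) :=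
          (hpartr w y).fderiv
        rw [this, hgdef]
        exact toDual_symm_apply
      have d1 : HasFDerivAt
          (fun y => ((innerSL ℝ (E := EuclideanSpace ℝ (Fin n))).flip u') (g (w, y)))
          (((innerSL ℝ (E := EuclideanSpace ℝ (Fin n))).flip u').comp (B k)) (Y k w) :=
        (((innerSL ℝ (E := EuclideanSpace ℝ (Fin n))).flip u').hasFDerivAt).comp (Y k w) hBhas
      have d2 : HasFDerivAt
          (fun y => (ContinuousLinearMap.apply ℝ ℝ u') (fderiv ℝ h y))
          ((ContinuousLinearMap.apply ℝ ℝ u').comp (fderiv ℝ (fderiv ℝ h) (Y k w))) (Y k w) :=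
        ((ContinuousLinearMap.apply ℝ ℝ u').hasFDerivAt).comp (Y k w) hΨd
      rw [hfe] at d1
      have := d1.unique d2
      have happ := congrFun (congrArg (fun (T : EuclideanSpace ℝ (Fin n) →L[ℝ] ℝ) => (T : _ → ℝ)) this) u
      simpa only [ContinuousLinearMap.comp_apply, ContinuousLinearMap.flip_apply,
        ContinuousLinearMap.apply_apply, innerSL_apply_apply] using happ
    apply ext_inner_right ℝ
    intro u
    rw [adjoint_inner_left]
    rw [real_inner_comm]
    rw [hinner, hinner, hsymm]
  -- the key backward-accumulation identity
  have key : ∀ k, k ≤ K → ContinuousLinearMap.adjoint (D k) (v k)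
      = ContinuousLinearMap.adjoint (D 0) (v 0)
        + α • ∑ i ∈ Finset.range k, ContinuousLinearMap.adjoint (A i) (v (i + 1)) := by
    intro k
    induction k with
    | zero => intro _; simp
    | succ k ih =>
      intro hk
      have hk' : k < K := Nat.lt_of_succ_le hk
      have step1 : ContinuousLinearMap.adjoint (D (k + 1)) (v (k + 1))
          = ContinuousLinearMap.adjoint (D k) (v (k + 1))
            + α • (ContinuousLinearMap.adjoint (A k) (v (k + 1))
              + ContinuousLinearMap.adjoint (D k)
                  (ContinuousLinearMap.adjoint (B k) (v (k + 1)))) := by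
        rw [hDsucc k]
        apply ext_inner_right ℝ
        intro u
        simp only [adjoint_inner_left, inner_add_left, inner_add_right,
          real_inner_smul_left, real_inner_smul_right, ContinuousLinearMap.add_apply,
          ContinuousLinearMap.smul_apply, ContinuousLinearMap.comp_apply]
        try ring
      rw [step1, hBadj k (v (k + 1))]
      have hvk : v k = v (k + 1) + α • B k (v (k + 1)) := by
        rw [hv k hk', hBstmt k]
      have hDv : ContinuousLinearMap.adjoint (D k) (v k)
          = ContinuousLinearMap.adjoint (D k) (v (k + 1))
            + α • ContinuousLinearMap.adjoint (D k) (B k (v (k + 1))) := by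
        rw [hvk, map_add, map_smul]
      have hcomb : ContinuousLinearMap.adjoint (D k) (v (k + 1))
            + α • ContinuousLinearMap.adjoint (D k) (B k (v (k + 1)))
          = ContinuousLinearMap.adjoint (D 0) (v 0)
            + α • ∑ i ∈ Finset.range k, ContinuousLinearMap.adjoint (A i) (v (i + 1)) := by
        rw [← hDv]; exact ih hk'.le
      calc ContinuousLinearMap.adjoint (D k) (v (k + 1))
            + α • (ContinuousLinearMap.adjoint (A k) (v (k + 1))
              + ContinuousLinearMap.adjoint (D k) (B k (v (k + 1))))
          = (ContinuousLinearMap.adjoint (D k) (v (k + 1))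
              + α • ContinuousLinearMap.adjoint (D k) (B k (v (k + 1))))
            + α • ContinuousLinearMap.adjoint (A k) (v (k + 1)) := by
            rw [smul_add]; abel
        _ = (ContinuousLinearMap.adjoint (D 0) (v 0)
              + α • ∑ i ∈ Finset.range k, ContinuousLinearMap.adjoint (A i) (v (i + 1)))
            + α • ContinuousLinearMap.adjoint (A k) (v (k + 1)) := by rw [hcomb]
        _ = ContinuousLinearMap.adjoint (D 0) (v 0)
            + α • ∑ i ∈ Finset.range (k + 1), ContinuousLinearMap.adjoint (A i) (v (i + 1)) := by
            rw [Finset.sum_range_succ, smul_add]; abel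
  -- assemble the total derivative
  have hD0 : D 0 = fderiv ℝ f w := by
    rw [hDdef]; simp only []
    rw [show Y 0 = f from funext hY0]
  set Φ : (EuclideanSpace ℝ (Fin m) × EuclideanSpace ℝ (Fin n)) →L[ℝ] ℝ := fderiv ℝ L (w, Y K w) with hΦdef
  have htot : HasFDerivAt (fun w' => L (w', Y K w'))
      (Φ.comp ((ContinuousLinearMap.id ℝ (EuclideanSpace ℝ (Fin m))).prod (D K))) w :=
    ((hLd (w, Y K w)).hasFDerivAt).comp w ((hasFDerivAt_id w).prodMk (hYd K))
  have hsplitΦ : Φ.comp ((ContinuousLinearMap.id ℝ (EuclideanSpace ℝ (Fin m))).prod (D K))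
      = Φ.comp (inl ℝ (EuclideanSpace ℝ (Fin m)) (EuclideanSpace ℝ (Fin n))) + (Φ.comp (inr ℝ (EuclideanSpace ℝ (Fin m)) (EuclideanSpace ℝ (Fin n)))).comp (D K) := by
    ext u
    have : ((u, D K u) : EuclideanSpace ℝ (Fin m) × EuclideanSpace ℝ (Fin n)) = (u, 0) + (0, D K u) := by simp
    simp only [ContinuousLinearMap.comp_apply, ContinuousLinearMap.prod_apply,
      ContinuousLinearMap.add_apply, ContinuousLinearMap.coe_id', id_eq,
      ContinuousLinearMap.inl_apply, ContinuousLinearMap.inr_apply]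
    rw [this, map_add]
  have hwhat2 : what = (toDual ℝ (EuclideanSpace ℝ (Fin m))).symm
      (Φ.comp ((ContinuousLinearMap.id ℝ (EuclideanSpace ℝ (Fin m))).prod (D K))) := by
    rw [hsplitΦ, map_add, toDual_symm_comp]
    have e1 : (toDual ℝ (EuclideanSpace ℝ (Fin m))).symm (Φ.comp (inl ℝ (EuclideanSpace ℝ (Fin m)) (EuclideanSpace ℝ (Fin n))))
        = gradient (fun w' => L (w', Y K w)) w := by
      rw [grad_def, (hpartl w (Y K w)).fderiv]
    have e2 : (toDual ℝ (EuclideanSpace ℝ (Fin n))).symm (Φ.comp (inr ℝ (EuclideanSpace ℝ (Fin m)) (EuclideanSpace ℝ (Fin n))))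
        = gradient (fun y => L (w, y)) (Y K w) := by
      rw [grad_def, (hpartr w (Y K w)).fderiv]
    rw [e1, e2, ← hvK, key K le_rfl, hD0, hwhat]
    simp only [hAstmt]
    abel
  rw [hasGradientAt_iff_hasFDerivAt, hwhat2]
  simpa using htot
end
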